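/- (Theorem 4) Let m ≥ 2, let α : Fin m → ℂ with α i ≠ 0 for every i, and let 𝔻 be an m-mode displacement operator with parameters (fun i => −(α i)/2). Let φ be a unit vector in the m-mode Hilbert space such that: (a) for every l with l+1 < m, φ is fixed by the operator (I ⊗ P₀ + P_{α l} ⊗ I − P_{α l} ⊗ P₀) acting on modes (l, l+1) and by the operator (I ⊗ P_{α(l+1)} + P₀ ⊗ I − P₀ ⊗ P_{α(l+1)}) acting on modes (l, l+1); and (b) (𝔻 φ) k = 0 for every k : Fin m → ℕ with Σ_i k i even. Then there exists c ∈ ℂ with |c| = 1 such that φ = c • ψ'^{GHZ-m}, where ψ'^{GHZ-m} = (2(1 − exp(−(Σ_i |α i|²)/2)))^{−1/2} • (Coh α − Coh 0). -/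

import Mathlib

open scoped ComplexConjugate ENNReal

/-- The components of the coherent state `|α⟩`: `exp(−|α|²/2)·αⁿ/√(n!)`. -/
noncomputable def cohFun (α : ℂ) : ℕ → ℂ := fun n =>
  (Real.exp (-‖α‖ ^ 2 / 2) / Real.sqrt (Nat.factorial n) : ℝ) * α ^ n

lemma cohFun_memℓp (α : ℂ) : Memℓp (cohFun α) 2 := by
  apply memℓp_gen
  have h : Summable (fun n : ℕ =>
      Real.exp (-‖α‖ ^ 2 / 2) ^ 2 * ((‖α‖ ^ 2) ^ n / (Nat.factorial n))) :=
    (Real.summable_pow_div_factorial (‖α‖ ^ 2)).mul_left _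
  refine h.congr fun n => ?_
  have h2 : ((2 : ℝ≥0∞).toReal) = (2 : ℝ) := by norm_num
  rw [h2, Real.rpow_two]
  have hn : ‖cohFun α n‖ = Real.exp (-‖α‖ ^ 2 / 2) / Real.sqrt (Nat.factorial n) * ‖α‖ ^ n := by
    simp only [cohFun, norm_mul, norm_pow, Complex.norm_real, Real.norm_eq_abs]
    rw [abs_of_pos (by positivity)]
  rw [hn, mul_pow, div_pow, Real.sq_sqrt (by positivity), pow_right_comm]
  ring

/-- The coherent state `|α⟩` as an element of `ℓ²(ℕ, ℂ)`. -/
noncomputable def coh (α : ℂ) : lp (fun _ : ℕ => ℂ) 2 := ⟨cohFun α, cohFun_memℓp α⟩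

/-- Components of the `m`-mode product coherent state. -/
noncomputable def CohFun {m : ℕ} (γ : Fin m → ℂ) : (Fin m → ℕ) → ℂ :=
  fun k => ∏ i, cohFun (γ i) (k i)

lemma CohFun_summable : ∀ (m : ℕ) (γ : Fin m → ℂ),
    Summable fun k : Fin m → ℕ => ∏ i, ‖cohFun (γ i) (k i)‖ ^ ((2 : ℝ≥0∞).toReal) := by
  intro m
  induction m with
  | zero =>
    intro γ
    haveI : Unique (Fin 0 → ℕ) := ⟨⟨fun i => i.elim0⟩, fun f => funext fun i => i.elim0⟩
    exact Summable.of_finite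
  | succ m ih =>
    intro γ
    have h0 : Summable fun x : ℕ => ‖cohFun (γ 0) x‖ ^ ((2 : ℝ≥0∞).toReal) :=
      (cohFun_memℓp (γ 0)).summable (by norm_num)
    have hrest := ih (fun i => γ i.succ)
    have hprod := h0.mul_of_nonneg hrest
      (fun x => Real.rpow_nonneg (norm_nonneg _) _)
      (fun k => Finset.prod_nonneg fun i _ => Real.rpow_nonneg (norm_nonneg _) _)
    refine (Fin.consEquiv fun _ : Fin (m + 1) => ℕ).summable_iff.1 (hprod.congr ?_)
    rintro ⟨x, k⟩
    show _ = ∏ i, ‖cohFun (γ i) (((Fin.consEquiv fun _ : Fin (m + 1) => ℕ) (x, k)) i)‖ ^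
      ((2 : ℝ≥0∞).toReal)
    rw [Fin.prod_univ_succ]
    simp [Fin.consEquiv, Fin.cons_zero, Fin.cons_succ]

lemma CohFun_memℓp {m : ℕ} (γ : Fin m → ℂ) : Memℓp (CohFun γ) 2 := by
  apply memℓp_gen
  refine (CohFun_summable m γ).congr fun k => ?_
  rw [CohFun, norm_prod, ← Real.finset_prod_rpow _ _ (fun i _ => norm_nonneg _)]

/-- The `m`-mode product coherent state `⊗ᵢ |γ i⟩` in `lp (fun _ : (Fin m → ℕ) => ℂ) 2`. -/
noncomputable def Coh {m : ℕ} (γ : Fin m → ℂ) : lp (fun _ : Fin m → ℕ => ℂ) 2 :=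
  ⟨CohFun γ, CohFun_memℓp γ⟩

/-- An `m`-mode displacement operator with parameters `γ : Fin m → ℂ`. -/
def IsDisplacement {m : ℕ}
    (𝔻 : lp (fun _ : Fin m → ℕ => ℂ) 2 ≃ₗᵢ[ℂ] lp (fun _ : Fin m → ℕ => ℂ) 2)
    (γ : Fin m → ℂ) : Prop :=
  ∀ β : Fin m → ℂ, 𝔻 (Coh β) =
    Complex.exp (∑ i, (γ i * conj (β i) - conj (γ i) * β i) / 2) • Coh (γ + β)


section Auxiliary

open scoped ComplexConjugate ENNReal

lemma cohFun_ne_zero {β : ℂ} (hβ : β ≠ 0) (n : ℕ) : cohFun β n ≠ 0 := by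
  apply mul_ne_zero
  · rw [Ne, Complex.ofReal_eq_zero]
    have h1 : (0:ℝ) < Real.sqrt (Nat.factorial n) :=
      Real.sqrt_pos.2 (by exact_mod_cast n.factorial_pos)
    exact ne_of_gt (div_pos (Real.exp_pos _) h1)
  · exact pow_ne_zero _ hβ

lemma cohFun_zero_of_ne {n : ℕ} (hn : n ≠ 0) : cohFun 0 n = 0 := by
  simp [cohFun, zero_pow hn]

lemma cohFun_apply_zero (β : ℂ) : cohFun β 0 = ((Real.exp (-‖β‖ ^ 2 / 2) : ℝ) : ℂ) := by
  simp [cohFun]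

lemma cohFun_zero_zero : cohFun 0 0 = 1 := by
  simp [cohFun]

lemma cohFun_apply_zero_ne (β : ℂ) : cohFun β 0 ≠ 0 := by
  rw [cohFun_apply_zero]
  simp [Real.exp_ne_zero]

/-- The invariant: `ψ k / CohFun α k` agrees with its value at the all-ones vector. -/
def Pp {m : ℕ} (α : Fin m → ℂ) (ψ : (Fin m → ℕ) → ℂ) (k : Fin m → ℕ) : Prop :=
  ψ k * CohFun α (fun _ => 1) = ψ (fun _ => 1) * CohFun α k

lemma CohFun_update {m : ℕ} (α : Fin m → ℂ) (k : Fin m → ℕ) (i : Fin m) (n : ℕ) :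
    CohFun α (Function.update k i n) =
      cohFun (α i) n * ∏ i' ∈ Finset.univ \ {i}, cohFun (α i') (k i') := by
  have h : ∀ i', cohFun (α i') (Function.update k i n i') =
      Function.update (fun i' => cohFun (α i') (k i')) i (cohFun (α i) n) i' := by
    intro i'
    rcases eq_or_ne i' i with rfl | hne
    · simp
    · simp [Function.update_of_ne hne]
  calc CohFun α (Function.update k i n)
      = ∏ i', Function.update (fun i' => cohFun (α i') (k i')) i (cohFun (α i) n) i' :=
        Finset.prod_congr rfl fun i' _ => h i'
    _ = _ := Finset.prod_update_of_mem (Finset.mem_univ i) _ _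

lemma transfer {m : ℕ} (α : Fin m → ℂ) (hα : ∀ i, α i ≠ 0)
    (ψ : (Fin m → ℕ) → ℂ) (k : Fin m → ℕ) (i : Fin m) (F : ℂ)
    (hF : ∀ n, ψ (Function.update k i n) = cohFun (α i) n * F) (n : ℕ) :
    Pp α ψ (Function.update k i n) ↔ Pp α ψ k := by
  set R := ∏ i' ∈ Finset.univ \ {i}, cohFun (α i') (k i') with hR
  have key : ∀ n', Pp α ψ (Function.update k i n') ↔
      (F * CohFun α (fun _ => 1) = ψ (fun _ => 1) * R) := by
    intro n'
    unfold Pp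
    rw [hF n', CohFun_update, ← hR]
    rw [show cohFun (α i) n' * F * CohFun α (fun _ => 1)
        = cohFun (α i) n' * (F * CohFun α (fun _ => 1)) from mul_assoc _ _ _,
      show ψ (fun _ => 1) * (cohFun (α i) n' * R)
        = cohFun (α i) n' * (ψ (fun _ => 1) * R) from by ring]
    exact mul_right_inj' (cohFun_ne_zero (hα i) n')
  have hk : Pp α ψ k ↔ (F * CohFun α (fun _ => 1) = ψ (fun _ => 1) * R) := by
    have := key (k i)
    rwa [Function.update_eq_self] at this
  exact (key n).trans hk.symm

lemma part1 {m : ℕ} (hm : 2 ≤ m) (α : Fin m → ℂ) (hα : ∀ i, α i ≠ 0)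
    (ψ : (Fin m → ℕ) → ℂ)
    (key1 : ∀ (l : ℕ) (hl : l + 1 < m) (k : Fin m → ℕ), k ⟨l + 1, hl⟩ ≠ 0 →
      ψ k = cohFun (α ⟨l, Nat.lt_of_succ_lt hl⟩) (k ⟨l, Nat.lt_of_succ_lt hl⟩) *
        ∑' j, conj (cohFun (α ⟨l, Nat.lt_of_succ_lt hl⟩) j) *
          ψ (Function.update k ⟨l, Nat.lt_of_succ_lt hl⟩ j))
    (key2 : ∀ (l : ℕ) (hl : l + 1 < m) (k : Fin m → ℕ), k ⟨l, Nat.lt_of_succ_lt hl⟩ ≠ 0 →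
      ψ k = cohFun (α ⟨l + 1, hl⟩) (k ⟨l + 1, hl⟩) *
        ∑' j, conj (cohFun (α ⟨l + 1, hl⟩) j) * ψ (Function.update k ⟨l + 1, hl⟩ j))
    (k : Fin m → ℕ) (j : Fin m) (hk : k j ≠ 0) :
    Pp α ψ k := by
  have T1 : ∀ (l : ℕ) (hl : l + 1 < m) (k : Fin m → ℕ) (n : ℕ), k ⟨l + 1, hl⟩ ≠ 0 →
      (Pp α ψ (Function.update k ⟨l, Nat.lt_of_succ_lt hl⟩ n) ↔ Pp α ψ k) := by
    intro l hl k n hkl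
    refine transfer α hα ψ k _
      (∑' j, conj (cohFun (α ⟨l, Nat.lt_of_succ_lt hl⟩) j) *
        ψ (Function.update k ⟨l, Nat.lt_of_succ_lt hl⟩ j)) (fun n' => ?_) n
    have hne : Function.update k ⟨l, Nat.lt_of_succ_lt hl⟩ n' ⟨l + 1, hl⟩ ≠ 0 := by
      rwa [Function.update_of_ne (by simp [Fin.ext_iff])]
    have h := key1 l hl (Function.update k ⟨l, Nat.lt_of_succ_lt hl⟩ n') hne
    rw [h, Function.update_self]
    congr 1
    exact tsum_congr fun j' => by rw [Function.update_idem]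
  have T2 : ∀ (l : ℕ) (hl : l + 1 < m) (k : Fin m → ℕ) (n : ℕ),
      k ⟨l, Nat.lt_of_succ_lt hl⟩ ≠ 0 →
      (Pp α ψ (Function.update k ⟨l + 1, hl⟩ n) ↔ Pp α ψ k) := by
    intro l hl k n hkl
    refine transfer α hα ψ k _
      (∑' j, conj (cohFun (α ⟨l + 1, hl⟩) j) *
        ψ (Function.update k ⟨l + 1, hl⟩ j)) (fun n' => ?_) n
    have hne : Function.update k ⟨l + 1, hl⟩ n' ⟨l, Nat.lt_of_succ_lt hl⟩ ≠ 0 := by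
      rwa [Function.update_of_ne (by simp [Fin.ext_iff])]
    have h := key2 l hl (Function.update k ⟨l + 1, hl⟩ n') hne
    rw [h, Function.update_self]
    congr 1
    exact tsum_congr fun j' => by rw [Function.update_idem]
  have up : ∀ (d t : ℕ) (ht : t < m), t + d + 1 = m → ∀ k : Fin m → ℕ, k ⟨t, ht⟩ ≠ 0 →
      (Pp α ψ (fun i => if t < i.val then 1 else k i) ↔ Pp α ψ k) := by
    intro d
    induction d with
    | zero =>
      intro t ht hd k hk0
      have : (fun i : Fin m => if t < i.val then 1 else k i) = k :=
        funext fun i => if_neg (by have := i.isLt; omega)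
      rw [this]
    | succ d ih =>
      intro t ht hd k hk0
      have ht1 : t + 1 < m := by omega
      have step := T2 t ht1 k 1 hk0
      have hk' : Function.update k ⟨t + 1, ht1⟩ 1 ⟨t + 1, ht1⟩ ≠ 0 := by simp
      have heq : (fun i : Fin m => if t < i.val then 1 else k i) =
          (fun i => if t + 1 < i.val then 1 else Function.update k ⟨t + 1, ht1⟩ 1 i) := by
        funext i
        by_cases h1 : t + 1 < i.val
        · rw [if_pos (by omega), if_pos h1]
        by_cases h2 : i.val = t + 1
        · rw [if_pos (by omega), if_neg h1, show i = ⟨t + 1, ht1⟩ from Fin.ext h2,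
            Function.update_self]
        · rw [if_neg (by omega), if_neg h1,
            Function.update_of_ne (Fin.ne_of_val_ne (show i.val ≠ t + 1 by omega))]
      rw [heq]
      exact (ih (t + 1) ht1 (by omega) _ hk').trans step
  have down : ∀ (t : ℕ) (ht : t < m) (k : Fin m → ℕ), k ⟨t, ht⟩ ≠ 0 →
      (Pp α ψ (fun i => if i.val < t then 1 else k i) ↔ Pp α ψ k) := by
    intro t
    induction t with
    | zero =>
      intro ht k hk0
      have : (fun i : Fin m => if i.val < 0 then 1 else k i) = k :=
        funext fun i => if_neg (Nat.not_lt_zero _)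
      rw [this]
    | succ t ih =>
      intro ht k hk0
      have step := T1 t ht k 1 hk0
      have hk' : Function.update k ⟨t, Nat.lt_of_succ_lt ht⟩ 1
          ⟨t, Nat.lt_of_succ_lt ht⟩ ≠ 0 := by simp
      have heq : (fun i : Fin m => if i.val < t + 1 then 1 else k i) =
          (fun i => if i.val < t then 1
            else Function.update k ⟨t, Nat.lt_of_succ_lt ht⟩ 1 i) := by
        funext i
        by_cases h1 : i.val < t
        · rw [if_pos (by omega), if_pos h1]
        by_cases h2 : i.val = t
        · rw [if_pos (by omega), if_neg h1,
            show i = ⟨t, Nat.lt_of_succ_lt ht⟩ from Fin.ext h2, Function.update_self]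
        · rw [if_neg (by omega), if_neg h1,
            Function.update_of_ne (Fin.ne_of_val_ne (show i.val ≠ t by omega))]
      rw [heq]
      exact (ih (Nat.lt_of_succ_lt ht) _ hk').trans step
  have hone : Pp α ψ (fun _ => 1) := by unfold Pp; rfl
  have u := up (m - 1 - j.val) j.val j.isLt (by have := j.isLt; omega) k hk
  set k1 : Fin m → ℕ := fun i => if j.val < i.val then 1 else k i with hk1def
  have hk1 : k1 ⟨j.val, j.isLt⟩ ≠ 0 := by
    simpa [hk1def] using hk
  have d := down j.val j.isLt k1 hk1
  set k2 : Fin m → ℕ := fun i => if i.val < j.val then 1 else k1 i with hk2def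
  have hk2one : ∀ i : Fin m, i.val ≠ j.val → k2 i = 1 := by
    intro i hi
    simp only [hk2def, hk1def]
    rcases Nat.lt_or_ge i.val j.val with h | h
    · rw [if_pos h]
    · rw [if_neg (by omega), if_pos (by omega)]
  have hfin : Pp α ψ k2 := by
    by_cases hj : j.val + 1 < m
    · have hne : k2 ⟨j.val + 1, hj⟩ ≠ 0 := by rw [hk2one _ (by simp)]; exact one_ne_zero
      have hiff := T1 j.val hj k2 1 hne
      have hupd : Function.update k2 ⟨j.val, Nat.lt_of_succ_lt hj⟩ 1 = (fun _ => 1) := by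
        funext i
        by_cases h : i = ⟨j.val, Nat.lt_of_succ_lt hj⟩
        · rw [h, Function.update_self]
        · rw [Function.update_of_ne h, hk2one _ (by simpa [Fin.ext_iff] using h)]
      rw [hupd] at hiff
      exact hiff.1 hone
    · have hl : j.val - 1 + 1 < m := by have := j.isLt; omega
      have hjge : 1 ≤ j.val := by have := j.isLt; omega
      have hne : k2 ⟨j.val - 1, Nat.lt_of_succ_lt hl⟩ ≠ 0 := by
        rw [hk2one _ (by simp; omega)]; exact one_ne_zero
      have hiff := T2 (j.val - 1) hl k2 1 hne
      have hupd : Function.update k2 ⟨j.val - 1 + 1, hl⟩ 1 = (fun _ => 1) := by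
        funext i
        by_cases h : i = ⟨j.val - 1 + 1, hl⟩
        · rw [h, Function.update_self]
        · rw [Function.update_of_ne h, hk2one _ (by simp [Fin.ext_iff] at h ⊢; omega)]
      rw [hupd] at hiff
      exact hiff.1 hone
  exact u.1 (d.1 hfin)

lemma tsum_normSq_cohFun (γ : ℂ) : ∑' n : ℕ, ‖cohFun γ n‖ ^ 2 = 1 := by
  have h : ∀ n : ℕ, ‖cohFun γ n‖ ^ 2
      = Real.exp (-‖γ‖ ^ 2) * ((‖γ‖ ^ 2) ^ n / (Nat.factorial n : ℝ)) := by
    intro n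
    have hn : ‖cohFun γ n‖ = Real.exp (-‖γ‖ ^ 2 / 2) / Real.sqrt (Nat.factorial n)
        * ‖γ‖ ^ n := by
      simp only [cohFun, norm_mul, norm_pow, Complex.norm_real, Real.norm_eq_abs]
      rw [abs_of_pos (by positivity)]
    rw [hn, mul_pow, div_pow, Real.sq_sqrt (by positivity),
      show Real.exp (-‖γ‖ ^ 2 / 2) ^ 2 = Real.exp (-‖γ‖ ^ 2) by
        rw [sq, ← Real.exp_add]; ring_nf,
      pow_right_comm]
    ring
  rw [tsum_congr h, tsum_mul_left]
  have hexp : ∑' n : ℕ, (‖γ‖ ^ 2) ^ n / (Nat.factorial n : ℝ) = Real.exp (‖γ‖ ^ 2) := by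
    rw [Real.exp_eq_exp_ℝ, NormedSpace.exp_eq_tsum_div]
  rw [hexp, ← Real.exp_add]
  simp

lemma summable_prod_pi : ∀ (m : ℕ) (f : Fin m → ℕ → ℝ), (∀ i n, 0 ≤ f i n) →
    (∀ i, Summable (f i)) → Summable (fun k : Fin m → ℕ => ∏ i, f i (k i)) := by
  intro m
  induction m with
  | zero =>
    intro f _ _
    haveI : Unique (Fin 0 → ℕ) := ⟨⟨fun i => i.elim0⟩, fun f => funext fun i => i.elim0⟩
    exact Summable.of_finite
  | succ m ih =>
    intro f hf hs
    have h0 := hs 0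
    have hrest : Summable (fun k : Fin m → ℕ => ∏ i, f i.succ (k i)) :=
      ih (fun i => f i.succ) (fun i n => hf i.succ n) (fun i => hs i.succ)
    have h1 : (0 : ℕ → ℝ) ≤ f 0 := fun n => hf 0 n
    have h2 : (0 : (Fin m → ℕ) → ℝ) ≤ (fun k : Fin m → ℕ => ∏ i, f i.succ (k i)) :=
      fun k => Finset.prod_nonneg fun i _ => hf i.succ _
    have hprod := h0.mul_of_nonneg hrest h1 h2
    refine (Fin.consEquiv fun _ : Fin (m + 1) => ℕ).summable_iff.1 (hprod.congr ?_)
    rintro ⟨x, k⟩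
    show _ = ∏ i, f i (((Fin.consEquiv fun _ : Fin (m + 1) => ℕ) (x, k)) i)
    rw [Fin.prod_univ_succ]
    simp [Fin.consEquiv, Fin.cons_zero, Fin.cons_succ]

lemma tsum_prod_pi : ∀ (m : ℕ) (f : Fin m → ℕ → ℝ), (∀ i n, 0 ≤ f i n) →
    (∀ i, Summable (f i)) →
    ∑' k : Fin m → ℕ, ∏ i, f i (k i) = ∏ i, ∑' n, f i n := by
  intro m
  induction m with
  | zero =>
    intro f _ _
    rw [tsum_eq_single (fun i => i.elim0)
      (fun b hb => absurd (funext fun i => i.elim0) hb)]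
    simp
  | succ m ih =>
    intro f hf hs
    have hrest : Summable (fun k : Fin m → ℕ => ∏ i, f i.succ (k i)) :=
      summable_prod_pi m (fun i => f i.succ) (fun i n => hf i.succ n) (fun i => hs i.succ)
    have h1 : (0 : ℕ → ℝ) ≤ f 0 := fun n => hf 0 n
    have h2 : (0 : (Fin m → ℕ) → ℝ) ≤ (fun k : Fin m → ℕ => ∏ i, f i.succ (k i)) :=
      fun k => Finset.prod_nonneg fun i _ => hf i.succ _
    have hsummable' := (hs 0).mul_of_nonneg hrest h1 h2
    have hsummable : Summable (fun p : ℕ × (Fin m → ℕ) =>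
        f 0 p.1 * ∏ i, f i.succ (p.2 i)) := hsummable'.congr (fun p => rfl)
    rw [← (Fin.consEquiv fun _ : Fin (m + 1) => ℕ).tsum_eq]
    have hcongr : ∀ p : ℕ × (Fin m → ℕ),
        (∏ i, f i (((Fin.consEquiv fun _ : Fin (m + 1) => ℕ) p) i))
          = f 0 p.1 * ∏ i, f i.succ (p.2 i) := by
      rintro ⟨x, k⟩
      rw [Fin.prod_univ_succ]
      simp [Fin.consEquiv, Fin.cons_zero, Fin.cons_succ]
    have hfiber : ∀ b : ℕ, Summable (fun k : Fin m → ℕ => f 0 b * ∏ i, f i.succ (k i)) :=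
      fun b => hrest.mul_left _
    rw [tsum_congr hcongr, Summable.tsum_prod' hsummable hfiber]
    simp_rw [tsum_mul_left]
    rw [tsum_mul_right, ih (fun i => f i.succ) (fun i n => hf i.succ n) (fun i => hs i.succ),
      Fin.prod_univ_succ]

lemma Coh_apply {m : ℕ} (γ : Fin m → ℂ) (k : Fin m → ℕ) :
    (Coh γ : ∀ _ : Fin m → ℕ, ℂ) k = CohFun γ k := rfl

lemma norm_Coh {m : ℕ} (γ : Fin m → ℂ) : ‖Coh γ‖ = 1 := by
  rw [lp.norm_eq_tsum_rpow (by norm_num) (Coh γ)]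
  have h2 : ((2 : ℝ≥0∞).toReal) = (2 : ℝ) := by norm_num
  have hc : ∀ k : Fin m → ℕ, ‖(Coh γ : ∀ _ : Fin m → ℕ, ℂ) k‖ ^ ((2 : ℝ≥0∞).toReal)
      = ∏ i, ‖cohFun (γ i) (k i)‖ ^ 2 := by
    intro k
    rw [h2, Real.rpow_two, Coh_apply, CohFun, norm_prod, ← Finset.prod_pow]
  have hsum : ∀ i : Fin m, Summable (fun n => ‖cohFun (γ i) n‖ ^ 2) := by
    intro i
    refine ((cohFun_memℓp (γ i)).summable (by norm_num)).congr fun n => ?_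
    rw [h2, Real.rpow_two]
  rw [tsum_congr hc, tsum_prod_pi m (fun i n => ‖cohFun (γ i) n‖ ^ 2)
    (fun i n => by positivity) hsum]
  have h1 : ∀ i : Fin m, ∑' n, ‖cohFun (γ i) n‖ ^ 2 = 1 := fun i => tsum_normSq_cohFun (γ i)
  rw [Finset.prod_congr rfl fun i _ => h1 i]
  simp

lemma CohFun_zero_apply {m : ℕ} (k : Fin m → ℕ) :
    CohFun (0 : Fin m → ℂ) k = if k = (fun _ => 0) then 1 else 0 := by
  split_ifs with h
  · rw [h, CohFun]
    simp [cohFun_zero_zero]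
  · have hex : ∃ i, k i ≠ 0 := by
      by_contra hc
      push_neg at hc
      exact h (funext hc)
    obtain ⟨i, hi⟩ := hex
    exact Finset.prod_eq_zero (Finset.mem_univ i) (cohFun_zero_of_ne hi)

lemma CohFun_apply_allzero {m : ℕ} (γ : Fin m → ℂ) :
    CohFun γ (fun _ => 0) = ((Real.exp (-(∑ i, ‖γ i‖ ^ 2) / 2) : ℝ) : ℂ) := by
  rw [CohFun]
  rw [Finset.prod_congr rfl fun i _ => cohFun_apply_zero (γ i), ← Complex.ofReal_prod,
    ← Real.exp_sum]
  congr 2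
  rw [← Finset.sum_div, ← Finset.sum_neg_distrib]

lemma CohFun_allzero_ne {m : ℕ} (γ : Fin m → ℂ) : CohFun γ (fun _ => 0) ≠ 0 :=
  Finset.prod_ne_zero_iff.2 fun i _ => cohFun_apply_zero_ne (γ i)

lemma CohFun_allzero_norm_eq {m : ℕ} (γ γ' : Fin m → ℂ) (h : ∀ i, ‖γ i‖ = ‖γ' i‖) :
    CohFun γ (fun _ => 0) = CohFun γ' (fun _ => 0) :=
  Finset.prod_congr rfl fun i _ => by rw [cohFun_apply_zero, cohFun_apply_zero, h i]

lemma inner_Coh_zero {m : ℕ} (α : Fin m → ℂ) :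
    (inner ℂ (Coh α) (Coh (0 : Fin m → ℂ)) : ℂ)
      = ((Real.exp (-(∑ i, ‖α i‖ ^ 2) / 2) : ℝ) : ℂ) := by
  rw [lp.inner_eq_tsum]
  rw [tsum_eq_single (fun _ => 0) ?side]
  case side =>
    intro k hk
    rw [RCLike.inner_apply', Coh_apply, Coh_apply, CohFun_zero_apply, if_neg hk, mul_zero]
  rw [RCLike.inner_apply', Coh_apply, Coh_apply, CohFun_zero_apply, if_pos rfl, mul_one,
    CohFun_apply_allzero, Complex.conj_ofReal]

lemma norm_Coh_sub_sq {m : ℕ} (α : Fin m → ℂ) :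
    ‖Coh α - Coh (0 : Fin m → ℂ)‖ ^ 2
      = 2 * (1 - Real.exp (-(∑ i, ‖α i‖ ^ 2) / 2)) := by
  rw [@norm_sub_sq ℂ, norm_Coh, norm_Coh, inner_Coh_zero]
  simp only [RCLike.re_to_complex, Complex.ofReal_re]
  ring

end Auxiliary

/-- Theorem 4: a unit vector passing all the local two-mode settings and
the displaced odd-parity measurement equals the m-mode GHZ-like coherent state
`ψ'^{GHZ-m}` up to a phase. -/
theorem ghz_minus_verification (m : ℕ) (hm : 2 ≤ m) (α : Fin m → ℂ) (hα : ∀ i, α i ≠ 0)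
    (𝔻 : lp (fun _ : Fin m → ℕ => ℂ) 2 ≃ₗᵢ[ℂ] lp (fun _ : Fin m → ℕ => ℂ) 2)
    (h𝔻 : IsDisplacement 𝔻 (fun i => -(α i) / 2))
    (φ : lp (fun _ : Fin m → ℕ => ℂ) 2) (hnorm : ‖φ‖ = 1)
    (ha₁ : ∀ (l : ℕ) (hl : l + 1 < m) (k : Fin m → ℕ),
      φ k
        = cohFun 0 (k ⟨l + 1, hl⟩) *
            (∑' j : ℕ, conj (cohFun 0 j) * φ (Function.update k ⟨l + 1, hl⟩ j))
        + cohFun (α ⟨l, Nat.lt_of_succ_lt hl⟩) (k ⟨l, Nat.lt_of_succ_lt hl⟩) *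
            (∑' j : ℕ, conj (cohFun (α ⟨l, Nat.lt_of_succ_lt hl⟩) j) *
              φ (Function.update k ⟨l, Nat.lt_of_succ_lt hl⟩ j))
        - cohFun (α ⟨l, Nat.lt_of_succ_lt hl⟩) (k ⟨l, Nat.lt_of_succ_lt hl⟩) *
            cohFun 0 (k ⟨l + 1, hl⟩) *
            (∑' j : ℕ, ∑' j' : ℕ,
              conj (cohFun (α ⟨l, Nat.lt_of_succ_lt hl⟩) j) * conj (cohFun 0 j') *
                φ (Function.update (Function.update k ⟨l, Nat.lt_of_succ_lt hl⟩ j)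
                    ⟨l + 1, hl⟩ j')))
    (ha₂ : ∀ (l : ℕ) (hl : l + 1 < m) (k : Fin m → ℕ),
      φ k
        = cohFun (α ⟨l + 1, hl⟩) (k ⟨l + 1, hl⟩) *
            (∑' j : ℕ, conj (cohFun (α ⟨l + 1, hl⟩) j) * φ (Function.update k ⟨l + 1, hl⟩ j))
        + cohFun 0 (k ⟨l, Nat.lt_of_succ_lt hl⟩) *
            (∑' j : ℕ, conj (cohFun 0 j) * φ (Function.update k ⟨l, Nat.lt_of_succ_lt hl⟩ j))
        - cohFun 0 (k ⟨l, Nat.lt_of_succ_lt hl⟩) *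
            cohFun (α ⟨l + 1, hl⟩) (k ⟨l + 1, hl⟩) *
            (∑' j : ℕ, ∑' j' : ℕ,
              conj (cohFun 0 j) * conj (cohFun (α ⟨l + 1, hl⟩) j') *
                φ (Function.update (Function.update k ⟨l, Nat.lt_of_succ_lt hl⟩ j)
                    ⟨l + 1, hl⟩ j')))
    (hb : ∀ k : Fin m → ℕ, Even (∑ i, k i) → (𝔻 φ) k = 0) :
    ∃ c : ℂ, ‖c‖ = 1 ∧
      φ = c • (((Real.sqrt (2 * (1 - Real.exp (-(∑ i, ‖α i‖ ^ 2) / 2))))⁻¹ : ℂ) •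
        (Coh α - Coh (0 : Fin m → ℂ))) := by
  classical
  -- pointwise consequences of the two measurement conditions
  have key1 : ∀ (l : ℕ) (hl : l + 1 < m) (k : Fin m → ℕ), k ⟨l + 1, hl⟩ ≠ 0 →
      (⇑φ) k = cohFun (α ⟨l, Nat.lt_of_succ_lt hl⟩) (k ⟨l, Nat.lt_of_succ_lt hl⟩) *
        ∑' j, conj (cohFun (α ⟨l, Nat.lt_of_succ_lt hl⟩) j) *
          (⇑φ) (Function.update k ⟨l, Nat.lt_of_succ_lt hl⟩ j) := by
    intro l hl k hk
    have h := ha₁ l hl k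
    rw [cohFun_zero_of_ne hk] at h
    simp only [zero_mul, mul_zero, zero_add, sub_zero] at h
    exact h
  have key2 : ∀ (l : ℕ) (hl : l + 1 < m) (k : Fin m → ℕ), k ⟨l, Nat.lt_of_succ_lt hl⟩ ≠ 0 →
      (⇑φ) k = cohFun (α ⟨l + 1, hl⟩) (k ⟨l + 1, hl⟩) *
        ∑' j, conj (cohFun (α ⟨l + 1, hl⟩) j) *
          (⇑φ) (Function.update k ⟨l + 1, hl⟩ j) := by
    intro l hl k hk
    have h := ha₂ l hl k
    rw [cohFun_zero_of_ne hk] at h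
    simp only [zero_mul, mul_zero, zero_add, add_zero, sub_zero] at h
    exact h
  have hAne : ∀ k : Fin m → ℕ, CohFun α k ≠ 0 :=
    fun k => Finset.prod_ne_zero_iff.2 fun i _ => cohFun_ne_zero (hα i) _
  have hP : ∀ k : Fin m → ℕ, (∃ i, k i ≠ 0) →
      (⇑φ) k * CohFun α (fun _ => 1) = (⇑φ) (fun _ => 1) * CohFun α k := by
    rintro k ⟨i, hi⟩
    exact part1 hm α hα (⇑φ) key1 key2 k i hi
  set a : ℂ := (⇑φ) (fun _ => 1) / CohFun α (fun _ => 1) with hadef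
  have hak : ∀ k : Fin m → ℕ, (∃ i, k i ≠ 0) → (⇑φ) k = a * CohFun α k := by
    intro k hk
    have h := hP k hk
    rw [hadef, div_mul_eq_mul_div, eq_div_iff (hAne _)]
    linear_combination h
  set b : ℂ := (⇑φ) (fun _ => 0) - a * CohFun α (fun _ => 0) with hbdef
  have hrep : φ = a • Coh α + b • Coh (0 : Fin m → ℂ) := by
    apply lp.ext
    funext k
    rw [lp.coeFn_add, Pi.add_apply, lp.coeFn_smul, lp.coeFn_smul, Pi.smul_apply,
      Pi.smul_apply, smul_eq_mul, smul_eq_mul, Coh_apply, Coh_apply, CohFun_zero_apply]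
    by_cases h : k = (fun _ => 0)
    · rw [if_pos h, mul_one, h, hbdef]
      ring
    · rw [if_neg h, mul_zero, add_zero]
      refine hak k ?_
      by_contra hc
      push_neg at hc
      exact h (funext hc)
  -- action of the displacement operator
  have hD1 : 𝔻 (Coh α) = Coh (fun i => α i / 2) := by
    have h := h𝔻 α
    beta_reduce at h
    rw [show ((fun i => -α i / 2) + α) = (fun i => α i / 2) by
        funext i; simp only [Pi.add_apply]; ring] at h
    rw [show (∑ i, (-α i / 2 * conj (α i) - conj (-α i / 2) * α i) / 2) = 0 from
        Finset.sum_eq_zero fun i _ => by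
          simp only [map_neg, map_div₀, Complex.conj_ofNat]
          ring] at h
    rw [h, Complex.exp_zero, one_smul]
  have hD0 : 𝔻 (Coh (0 : Fin m → ℂ)) = Coh (fun i => -α i / 2) := by
    have h := h𝔻 0
    beta_reduce at h
    rw [show ((fun i => -α i / 2) + 0) = (fun i => -α i / 2) by
        funext i; simp] at h
    rw [show (∑ i, (-α i / 2 * conj ((0 : Fin m → ℂ) i)
          - conj (-α i / 2) * (0 : Fin m → ℂ) i) / 2) = 0 from
        Finset.sum_eq_zero fun i _ => by simp] at h
    rw [h, Complex.exp_zero, one_smul]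
  -- the displaced even-parity condition at k = 0 forces b = -a
  have hball : b = -a := by
    have h := hb (fun _ => 0) (by simp)
    rw [hrep, map_add, map_smul, map_smul, hD1, hD0] at h
    rw [lp.coeFn_add, Pi.add_apply, lp.coeFn_smul, lp.coeFn_smul, Pi.smul_apply,
      Pi.smul_apply, smul_eq_mul, smul_eq_mul, Coh_apply, Coh_apply,
      CohFun_allzero_norm_eq (fun i => -α i / 2) (fun i => α i / 2)
        (fun i => by simp only [neg_div, norm_neg])] at h
    have h' : (a + b) * CohFun (fun i => α i / 2) (fun _ => 0) = 0 := by
      linear_combination h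
    rcases mul_eq_zero.1 h' with h'' | h''
    · linear_combination h''
    · exact absurd h'' (CohFun_allzero_ne _)
  have hφa : φ = a • (Coh α - Coh (0 : Fin m → ℂ)) := by
    rw [hrep, hball, neg_smul, ← sub_eq_add_neg, ← smul_sub]
  -- norm bookkeeping
  have hspos : 0 < ∑ i, ‖α i‖ ^ 2 := by
    refine Finset.sum_pos (fun i _ => ?_) ⟨⟨0, by omega⟩, Finset.mem_univ _⟩
    have : 0 < ‖α i‖ := norm_pos_iff.2 (hα i)
    positivity
  have hexplt : Real.exp (-(∑ i, ‖α i‖ ^ 2) / 2) < 1 :=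
    Real.exp_lt_one_iff.2 (by linarith)
  set t := Real.sqrt (2 * (1 - Real.exp (-(∑ i, ‖α i‖ ^ 2) / 2))) with htdef
  have htpos : 0 < t := Real.sqrt_pos.2 (by linarith)
  have hDn : ‖Coh α - Coh (0 : Fin m → ℂ)‖ = t := by
    rw [htdef, ← norm_Coh_sub_sq α, Real.sqrt_sq (norm_nonneg _)]
  have hat : ‖a‖ * t = 1 := by
    rw [hφa, norm_smul, hDn] at hnorm
    exact hnorm
  have htne : (t : ℂ) ≠ 0 := Complex.ofReal_ne_zero.2 (ne_of_gt htpos)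
  refine ⟨a * (t : ℂ), ?_, ?_⟩
  · rw [norm_mul, Complex.norm_real, Real.norm_eq_abs, abs_of_pos htpos]
    exact hat
  · rw [hφa, smul_smul]
    congr 1
    field_simp
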